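/- Let m < s < t be the three squarefree integers associated to a totally real biquadratic field. If √t − √s ≤ 1, then m is even and 2√m > √s. -/
import Mathlib


/-- For the three squarefree integers `m < s < t` associated to a totally real biquadratic
field: if `√t − √s ≤ 1`, then `m` is even and `2√m > √s`. -/
theorem stmt_8 (m s t : ℕ) (hm : 1 < m) (hms : m < s) (hst : s < t)
    (hsfm : Squarefree m) (hsfs : Squarefree s) (hsft : Squarefree t)
    (ht : t = m * s / Nat.gcd m s ^ 2)
    (h : Real.sqrt t - Real.sqrt s ≤ 1) :
    2 ∣ m ∧ Real.sqrt s < 2 * Real.sqrt m := by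
  -- Step 1: turn the real hypothesis into a natural-number inequality
  have hkey : (t - s - 1) ^ 2 ≤ 4 * s := by
    have hts : Real.sqrt t ≤ 1 + Real.sqrt s := by linarith
    have h2 : (t : ℝ) ≤ (1 + Real.sqrt s) ^ 2 := by
      rw [← Real.sq_sqrt (by positivity : (0:ℝ) ≤ (t:ℝ))]
      exact pow_le_pow_left₀ (Real.sqrt_nonneg _) hts 2
    have hs2 : Real.sqrt s ^ 2 = (s : ℝ) := Real.sq_sqrt (by positivity)
    have h3 : ((t - s - 1 : ℕ) : ℝ) ≤ 2 * Real.sqrt s := by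
      have hc : ((t - s - 1 : ℕ) : ℝ) = (t : ℝ) - s - 1 := by
        rw [Nat.cast_sub (by omega), Nat.cast_sub (by omega : s ≤ t)]
        push_cast; ring
      rw [hc]; nlinarith [hs2]
    have h4 : (((t - s - 1 : ℕ) : ℝ)) ^ 2 ≤ 4 * (s : ℝ) := by
      nlinarith [Real.sqrt_nonneg (s:ℝ), hs2,
        (by positivity : (0:ℝ) ≤ ((t - s - 1 : ℕ) : ℝ))]
    exact_mod_cast h4
  clear h
  -- Step 2: set up g, a, b
  obtain ⟨a, ha⟩ := Nat.gcd_dvd_left m s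
  obtain ⟨b, hb⟩ := Nat.gcd_dvd_right m s
  generalize hgdef : Nat.gcd m s = g at ht ha hb
  have hg0 : 0 < g := by
    rw [← hgdef]; exact Nat.gcd_pos_of_pos_left _ (by omega)
  clear hgdef hsfm hsfs hsft
  have htab : t = a * b := by
    rw [ht, ha, hb, pow_two]
    rw [show g * a * (g * b) = g * g * (a * b) by ring]
    exact Nat.mul_div_cancel_left _ (Nat.mul_pos hg0 hg0)
  clear ht
  have hab : a < b := by
    have := hms; rw [ha, hb] at this
    exact lt_of_mul_lt_mul_left this (Nat.zero_le g)
  have hb0 : 0 < b := by omega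
  have hga : g < a := by
    have := hst; rw [hb, htab] at this
    exact lt_of_mul_lt_mul_right this (Nat.zero_le b)
  obtain ⟨c, hceq⟩ : ∃ c, t = c + s + 1 := ⟨t - s - 1, by omega⟩
  have hkey' : c ^ 2 ≤ 4 * s := by rwa [show t - s - 1 = c from by omega] at hkey
  clear hkey hm hms
  -- Step 3: a = g + 1
  have hA : a = g + 1 := by
    by_contra hA
    have ha2 : g + 2 ≤ a := by omega
    have hb3 : g + 3 ≤ b := by omega
    have e1 : c + g * b + 1 = a * b := by rw [← hb, ← htab]; omega
    have e2 : c ^ 2 ≤ 4 * (g * b) := by rw [← hb]; exact hkey'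
    have e3 : (g + 2) * b ≤ a * b := Nat.mul_le_mul_right b ha2
    have e4 : 2 * b ≤ c + 1 := by nlinarith [e1, e3]
    have e5 : (2 * b - 1) ^ 2 ≤ 4 * (g * b) :=
      le_trans (Nat.pow_le_pow_left (by omega) 2) e2
    have e5' : ((2:ℤ) * b - 1) ^ 2 ≤ 4 * ((g:ℤ) * b) := by
      have := e5
      zify [show 1 ≤ 2 * b by omega] at this
      exact_mod_cast this
    have hb3' : (g : ℤ) + 3 ≤ (b : ℤ) := by exact_mod_cast hb3
    nlinarith [e5', hb3', (by positivity : (0:ℤ) < (b:ℤ))]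
  have hmval : m = g * (g + 1) := by rw [ha, hA]
  have hdvd : 2 ∣ m := by rw [hmval]; exact (Nat.even_mul_succ_self g).two_dvd
  -- Step 4: s < 4 m
  have e1 : c + g * b + 1 = (g + 1) * b := by rw [← hA, ← hb, ← htab]; omega
  have e2 : c ^ 2 ≤ 4 * (g * b) := by rw [← hb]; exact hkey'
  have hcb : c + 1 = b := by
    have h5 : c + g * b + 1 = g * b + b := by rw [e1]; ring
    generalize g * b = P at h5
    omega
  subst hcb
  have hble : c ≤ 4 * g := by nlinarith [e2]
  have hs4m : s < 4 * m := by rw [hb, hmval]; nlinarith [hble, hg0]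
  -- Step 5: conclude
  refine ⟨hdvd, ?_⟩
  have h2m : (2 : ℝ) * Real.sqrt m = Real.sqrt (4 * m) := by
    rw [show (4 : ℝ) * m = 2 ^ 2 * m by ring, Real.sqrt_mul (by positivity),
      Real.sqrt_sq (by norm_num)]
  rw [h2m]
  exact Real.sqrt_lt_sqrt (by positivity) (by exact_mod_cast hs4m)
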